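/- arXiv:1506.04905 — 10 statements merged into one kernel-verified Lean document; each statement's English description precedes it below -/
import Mathlib

section
/- Let V be a finite-dimensional vector space over a field F with two bases α = {α₁,...,αₙ} and β = {β₁,...,βₙ}. Then the non-zero component graphs Γ(V_α) and Γ(V_β) are isomorphic as graphs. -/
/-- The non-zero component graph of a vector space `V` with respect to a basis `b`:
vertices are the non-zero vectors, and two distinct vectors are adjacent iff they have a
common basis vector with non-zero coefficient in their basis representations. -/
def NZCG {F V : Type*} [Field F] [AddCommGroup V] [Module F V] {n : ℕ}
    (b : Module.Basis (Fin n) F V) : SimpleGraph {v : V // v ≠ 0} where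
  Adj x y := x ≠ y ∧ ∃ i, b.repr x.1 i ≠ 0 ∧ b.repr y.1 i ≠ 0
  symm := by
    constructor
    rintro x y ⟨hxy, i, h1, h2⟩
    exact ⟨hxy.symm, i, h2, h1⟩
  loopless := by
    constructor
    rintro x ⟨h, _⟩
    exact h rfl

theorem nzcg_basis_independent {F V : Type*} [Field F] [AddCommGroup V] [Module F V] {n : ℕ}
    (bα bβ : Module.Basis (Fin n) F V) :
    Nonempty (NZCG bα ≃g NZCG bβ) := by
  let e : V ≃ₗ[F] V := bα.repr ≪≫ₗ bβ.repr.symm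
  have hrepr : ∀ v : V, bβ.repr (e v) = bα.repr v := by
    intro v; simp [e]
  refine ⟨⟨⟨fun x => ⟨e x.1, ?_⟩, fun y => ⟨e.symm y.1, ?_⟩, ?_, ?_⟩, ?_⟩⟩
  · simpa using x.2
  · simpa using y.2
  · intro x; ext; simp
  · intro y; ext; simp
  · intro x y
    simp only [NZCG, Equiv.coe_fn_mk, ne_eq, Subtype.mk.injEq, hrepr]
    constructor
    · rintro ⟨h, hi⟩
      exact ⟨fun hxy => h (congrArg (fun z => e z.1) hxy), hi⟩
    · rintro ⟨h, hi⟩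
      exact ⟨fun hxy => h (Subtype.ext (e.injective hxy)), hi⟩
end

section
/- The non-zero component graph Γ(V_α) of a finite-dimensional vector space V (of dimension n ≥ 1) is connected, and if dim V ≥ 2 its diameter equals 2. -/
theorem nzcg_connected_diam {F V : Type*} [Field F] [AddCommGroup V] [Module F V] {n : ℕ}
    (hn : 0 < n) (b : Module.Basis (Fin n) F V) :
    (NZCG b).Connected ∧ (2 ≤ n → (NZCG b).diam = 2) := by
  haveI : NeZero n := ⟨hn.ne'⟩
  -- the all-ones vector
  set s : V := ∑ i, b i with hs
  have hrepr : ∀ j, b.repr s j = 1 := by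
    intro j
    simp [hs, map_sum, Finsupp.single_apply]
  have hs0 : s ≠ 0 := by
    intro h
    have := hrepr ⟨0, hn⟩
    rw [h] at this
    simp at this
  set sv : {v : V // v ≠ 0} := ⟨s, hs0⟩ with hsv
  -- each nonzero vector has a nonzero coordinate
  have hcoord : ∀ x : {v : V // v ≠ 0}, ∃ i, b.repr x.1 i ≠ 0 := by
    intro x
    by_contra h
    push_neg at h
    apply x.2
    have : b.repr x.1 = 0 := Finsupp.ext fun i => h i
    simpa using congrArg b.repr.symm this
  -- every vertex is adjacent to `sv` or equal to it
  have hadj : ∀ x : {v : V // v ≠ 0}, x = sv ∨ (NZCG b).Adj x sv := by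
    intro x
    by_cases hx : x = sv
    · exact Or.inl hx
    · obtain ⟨i, hi⟩ := hcoord x
      exact Or.inr ⟨hx, i, hi, by rw [hrepr i]; exact one_ne_zero⟩
  have hconn : (NZCG b).Connected := by
    rw [SimpleGraph.connected_iff_exists_forall_reachable]
    refine ⟨sv, fun x => ?_⟩
    rcases hadj x with h | h
    · exact h ▸ SimpleGraph.Reachable.refl _
    · exact (h.symm.reachable)
  refine ⟨hconn, fun h2 => ?_⟩
  have hle2 : ∀ u v : {v : V // v ≠ 0}, (NZCG b).edist u v ≤ 2 := by
    intro u v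
    have h1 : ∀ x : {v : V // v ≠ 0}, (NZCG b).edist x sv ≤ 1 := by
      intro x
      rcases hadj x with h | h
      · rw [h, SimpleGraph.edist_self]; exact zero_le_one
      · exact le_of_eq (SimpleGraph.edist_eq_one_iff_adj.mpr h)
    calc (NZCG b).edist u v ≤ (NZCG b).edist u sv + (NZCG b).edist sv v :=
            SimpleGraph.edist_triangle
      _ ≤ 1 + 1 := add_le_add (h1 u) (by rw [SimpleGraph.edist_comm]; exact h1 v)
      _ = 2 := by norm_num
  -- the two basis vectors b 0 and b 1 are at distance ≥ 2
  have h01 : (0 : Fin n) ≠ 1 := by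
    intro h
    have := congrArg Fin.val h
    simp [Fin.val_one'] at this
    omega
  have hb0 : (b 0 : V) ≠ 0 := b.ne_zero 0
  have hb1 : (b 1 : V) ≠ 0 := b.ne_zero 1
  set u : {v : V // v ≠ 0} := ⟨b 0, hb0⟩
  set v : {v : V // v ≠ 0} := ⟨b 1, hb1⟩
  have huv : u ≠ v := by
    intro h
    exact h01 (b.injective (congrArg Subtype.val h))
  have hnadj : ¬ (NZCG b).Adj u v := by
    rintro ⟨-, i, hi0, hi1⟩
    rw [show (u.1 : V) = b 0 from rfl, b.repr_self, Finsupp.single_apply] at hi0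
    rw [show (v.1 : V) = b 1 from rfl, b.repr_self, Finsupp.single_apply] at hi1
    by_cases h : (0 : Fin n) = i
    · subst h; simp [h01] at hi1; omega
    · simp [h] at hi0
  have hge2 : 2 ≤ (NZCG b).edist u v := by
    have hne0 : (NZCG b).edist u v ≠ 0 :=
      fun h => huv (SimpleGraph.edist_eq_zero_iff.mp h)
    have hne1 : (NZCG b).edist u v ≠ 1 :=
      fun h => hnadj (SimpleGraph.edist_eq_one_iff_adj.mp h)
    have := ENat.one_le_iff_ne_zero.mpr hne0
    rcases lt_or_eq_of_le this with h | h
    · exact Order.add_one_le_of_lt h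
    · exact absurd h.symm hne1
  have hediam : (NZCG b).ediam = 2 := by
    apply le_antisymm
    · exact SimpleGraph.ediam_le_of_edist_le hle2
    · exact le_trans hge2 SimpleGraph.edist_le_ediam
  rw [SimpleGraph.diam, hediam]
  rfl
end

section
/- The basis {α₁, α₂, ..., αₙ} is a minimal dominating set of the non-zero component graph Γ(V_α). -/
/-- `D` is a dominating set of `G`: every vertex outside `D` is adjacent to a vertex of `D`. -/
def IsDominatingSet {α : Type*} (G : SimpleGraph α) (D : Set α) : Prop :=
  ∀ v ∉ D, ∃ u ∈ D, G.Adj u v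

theorem nzcg_basis_minimal_dominating {F V : Type*} [Field F] [AddCommGroup V] [Module F V]
    {n : ℕ} (b : Module.Basis (Fin n) F V) :
    IsDominatingSet (NZCG b) {v : {v : V // v ≠ 0} | ∃ i, (v : V) = b i} ∧
      ∀ D' ⊂ {v : {v : V // v ≠ 0} | ∃ i, (v : V) = b i},
        ¬ IsDominatingSet (NZCG b) D' := by
  constructor
  · intro v hv
    have hv0 : b.repr v.1 ≠ 0 := fun h => v.2 (b.repr.map_eq_zero_iff.mp h)
    obtain ⟨i, hi⟩ := Finsupp.ne_iff.mp hv0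
    simp only [Finsupp.coe_zero, Pi.zero_apply] at hi
    refine ⟨⟨b i, b.ne_zero i⟩, ⟨i, rfl⟩, ?_, i, ?_, hi⟩
    · intro h
      exact hv ⟨i, by rw [← h]⟩
    · simp
  · intro D' hD' hdom
    obtain ⟨j, hjD, hjB⟩ : ∃ j, (⟨b j, b.ne_zero j⟩ : {v : V // v ≠ 0}) ∉ D' ∧
        (⟨b j, b.ne_zero j⟩ : {v : V // v ≠ 0}) ∈ {v : {v : V // v ≠ 0} | ∃ i, (v : V) = b i} := by
      obtain ⟨x, hxB, hxD⟩ := Set.exists_of_ssubset hD'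
      obtain ⟨j, hj⟩ := hxB
      refine ⟨j, ?_, ⟨j, rfl⟩⟩
      intro h
      exact hxD (by rwa [show x = ⟨b j, b.ne_zero j⟩ from Subtype.ext hj])
    obtain ⟨u, huD, hadj⟩ := hdom _ hjD
    obtain ⟨hne, i, hui, hji⟩ := hadj
    obtain ⟨k, hk⟩ := hD'.1 huD
    have hki : k = i := by
      by_contra h
      apply hui
      rw [hk]
      simp [Finsupp.single_apply, h]
    have hji' : j = i := by
      by_contra h
      apply hji
      simp [Finsupp.single_apply, h]
    exact hne (Subtype.ext (by rw [hk, hki, hji']))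
end

section
/- If D = {β₁,...,β_l} is a minimal dominating set of Γ(V_α), then l ≤ n = dim V. Thus the maximum cardinality of a minimal dominating set of Γ(V_α) equals n. -/
theorem nzcg_minimal_dominating_card_le {F V : Type*} [Field F] [AddCommGroup V] [Module F V]
    {n : ℕ} (b : Module.Basis (Fin n) F V) :
    (∀ D : Set {v : V // v ≠ 0}, IsDominatingSet (NZCG b) D →
        (∀ D' ⊂ D, ¬ IsDominatingSet (NZCG b) D') → D.Finite ∧ D.ncard ≤ n) ∧
      ∃ D : Set {v : V // v ≠ 0}, IsDominatingSet (NZCG b) D ∧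
        (∀ D' ⊂ D, ¬ IsDominatingSet (NZCG b) D') ∧ D.ncard = n := by
  classical
  have hcoord : ∀ v : {v : V // v ≠ 0}, ∃ i, b.repr v.1 i ≠ 0 := by
    intro v
    by_contra h
    push_neg at h
    apply v.2
    have h0 : b.repr v.1 = 0 := Finsupp.ext fun i => h i
    have := b.repr.injective (by simpa using h0)
    simpa using this
  constructor
  · intro D hdom hmin
    have key : ∀ β ∈ D, ∃ i, b.repr β.1 i ≠ 0 ∧
        ∀ u ∈ D, u ≠ β → b.repr u.1 i = 0 := by
      intro β hβ
      have hsub : D \ {β} ⊂ D := Set.sdiff_singleton_ssubset.mpr hβ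
      have hnd := hmin _ hsub
      rw [IsDominatingSet] at hnd
      push_neg at hnd
      obtain ⟨v, hv1, hv2⟩ := hnd
      by_cases hvβ : v = β
      · subst hvβ
        obtain ⟨i, hi⟩ := hcoord v
        refine ⟨i, hi, ?_⟩
        intro u hu hne
        by_contra hui
        exact hv2 u ⟨hu, hne⟩ ⟨hne, i, hui, hi⟩
      · have hvD : v ∉ D := fun h => hv1 ⟨h, hvβ⟩
        obtain ⟨u₀, hu₀D, hadj⟩ := hdom v hvD
        have hu₀ : u₀ = β := by
          by_contra h
          exact hv2 u₀ ⟨hu₀D, h⟩ hadj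
        subst hu₀
        obtain ⟨hne, i, h1, h2⟩ := hadj
        refine ⟨i, h1, ?_⟩
        intro u hu huβ
        by_contra hui
        exact hv2 u ⟨hu, huβ⟩ ⟨fun h => hvD (h ▸ hu), i, hui, h2⟩
    have key' : ∀ x : ↥D, ∃ i, b.repr x.1.1 i ≠ 0 ∧
        ∀ u ∈ D, u ≠ x.1 → b.repr u.1 i = 0 := fun x => key x.1 x.2
    choose f hf1 hf2 using key'
    have hinj : Function.Injective f := by
      intro x y hxy
      by_contra hne
      have h0 : b.repr y.1.1 (f x) = 0 :=
        hf2 x y.1 y.2 (fun h => hne (Subtype.ext h.symm))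
      rw [hxy] at h0
      exact hf1 y h0
    have : Finite ↥D := Finite.of_injective f hinj
    have hfin : D.Finite := Set.finite_coe_iff.mp this
    refine ⟨hfin, ?_⟩
    have := Nat.card_le_card_of_injective f hinj
    simpa [Nat.card_coe_set_eq] using this
  · refine ⟨Set.range (fun i : Fin n => (⟨b i, b.ne_zero i⟩ : {v : V // v ≠ 0})), ?_, ?_, ?_⟩
    · intro v hv
      obtain ⟨i, hi⟩ := hcoord v
      refine ⟨⟨b i, b.ne_zero i⟩, ⟨i, rfl⟩, ?_, i, ?_, hi⟩
      · intro h
        exact hv ⟨i, h⟩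
      · simp
    · intro D' hsub hdom'
      obtain ⟨x, hxD, hxD'⟩ := Set.exists_of_ssubset hsub
      obtain ⟨j, hj⟩ := hxD
      obtain ⟨u, huD', hadj⟩ := hdom' x hxD'
      obtain ⟨k, hk⟩ := hsub.1 huD'
      obtain ⟨hne, i, h1, h2⟩ := hadj
      rw [← hk] at h1
      rw [← hj] at h2
      simp only [Module.Basis.repr_self] at h1 h2
      have hik : i = k := by
        by_contra h
        exact h1 (Finsupp.single_eq_of_ne (fun hh => h hh))
      have hij : i = j := by
        by_contra h
        exact h2 (Finsupp.single_eq_of_ne (fun hh => h hh))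
      exact hne (by rw [← hk, ← hj, ← hik, ← hij])
    · have hinj : Function.Injective (fun i : Fin n => (⟨b i, b.ne_zero i⟩ : {v : V // v ≠ 0})) := by
        intro i j h
        exact b.injective (congrArg Subtype.val h)
      rw [← Nat.card_coe_set_eq, Nat.card_range_of_injective hinj]
      simp
end

section
/- The independence number of the non-zero component graph Γ(V_α) equals dim V = n. -/
/-- `I` is an independent set of vertices of `G`: pairwise non-adjacent. -/
def IsIndependentSet {α : Type*} (G : SimpleGraph α) (I : Set α) : Prop :=
  I.Pairwise fun u v => ¬ G.Adj u v

theorem nzcg_independence_number {F V : Type*} [Field F] [AddCommGroup V] [Module F V]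
    {n : ℕ} (b : Module.Basis (Fin n) F V) :
    (∃ I : Set {v : V // v ≠ 0}, IsIndependentSet (NZCG b) I ∧ I.ncard = n) ∧
      ∀ I : Set {v : V // v ≠ 0}, IsIndependentSet (NZCG b) I →
        I.Finite ∧ I.ncard ≤ n := by
  constructor
  · refine ⟨Set.range (fun i : Fin n => (⟨b i, b.ne_zero i⟩ : {v : V // v ≠ 0})), ?_, ?_⟩
    · rintro x ⟨i, rfl⟩ y ⟨j, rfl⟩ hne hadj
      obtain ⟨-, k, hk1, hk2⟩ := hadj
      rw [b.repr_self, Finsupp.single_apply] at hk1 hk2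
      have hi : i = k := by by_contra h; simp [h] at hk1
      have hj : j = k := by by_contra h; simp [h] at hk2
      exact hne (by simp [hi, hj])
    · have hinj : Function.Injective (fun i : Fin n => (⟨b i, b.ne_zero i⟩ : {v : V // v ≠ 0})) := by
        intro i j h
        exact b.injective (congrArg Subtype.val h)
      rw [← Set.image_univ, Set.ncard_image_of_injective _ hinj, Set.ncard_univ, Nat.card_eq_fintype_card, Fintype.card_fin]
  · intro I hI
    have hex : ∀ v : I, ∃ i : Fin n, b.repr v.1.1 i ≠ 0 := by
      rintro ⟨⟨v, hv⟩, hvI⟩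
      by_contra h
      push_neg at h
      apply hv
      have : b.repr v = 0 := Finsupp.ext h
      simpa using congrArg b.repr.symm this
    choose f hf using hex
    have hinj : Function.Injective f := by
      intro u v huv
      by_contra hne
      have hne' : u.1 ≠ v.1 := fun h => hne (Subtype.ext h)
      exact hI u.2 v.2 hne' ⟨hne', f u, hf u, huv ▸ hf v⟩
    have hfin : Finite I := Finite.of_injective f hinj
    refine ⟨Set.finite_coe_iff.mp hfin, ?_⟩
    calc I.ncard = Nat.card I := rfl
      _ ≤ Nat.card (Fin n) := Nat.card_le_card_of_injective f hinj
      _ = n := by simp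
end

section
/- Every independent set of vertices in the non-zero component graph Γ(V_α) is a linearly independent subset of the vector space V. -/
theorem nzcg_indep_set_linearIndependent {F V : Type*} [Field F] [AddCommGroup V] [Module F V]
    {n : ℕ} (b : Module.Basis (Fin n) F V) (I : Set {v : V // v ≠ 0})
    (hI : IsIndependentSet (NZCG b) I) :
    LinearIndependent F (fun v : I => ((v : {v : V // v ≠ 0}) : V)) := by
  rw [linearIndependent_iff']
  intro s g hsum v hv
  -- b.repr of v is nonzero, pick i with nonzero coefficient
  have hv0 : b.repr v.1.1 ≠ 0 := fun h => v.1.2 (by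
    have := congrArg b.repr.symm h
    simpa using this)
  obtain ⟨i, hi⟩ : ∃ i, b.repr v.1.1 i ≠ 0 := by
    by_contra h
    push_neg at h
    exact hv0 (Finsupp.ext h)
  have h1 := congrArg (fun x => (b.repr x) i) hsum
  simp only [map_sum, map_smul, Finsupp.coe_smul, Finsupp.smul_apply, map_zero,
    Finsupp.coe_zero, Pi.zero_apply, Finset.sum_apply] at h1
  rw [Finsupp.finset_sum_apply, Finset.sum_eq_single v] at h1
  · have : g v * b.repr v.1.1 i = 0 := by simpa [smul_eq_mul] using h1
    exact (mul_eq_zero.mp this).resolve_right hi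
  · intro w hw hwv
    have hne : w.1 ≠ v.1 := fun h => hwv (Subtype.ext h)
    have hnadj := hI w.2 v.2 hne
    simp only [NZCG, not_and, not_exists] at hnadj
    have := hnadj hne i
    have hw0 : b.repr w.1.1 i = 0 := by
      by_contra h
      exact (this h) hi
    simp [Finsupp.smul_apply, hw0]
  · intro h
    exact absurd hv h
end

section
/- Let V and W be finite-dimensional vector spaces over the same field F with bases {α₁,...,αₙ} and {β₁,...,β_k}. If Γ(V_α) and Γ(W_β) are isomorphic as graphs, then dim V = dim W. -/
lemma nzcg_iso_le {F V W : Type*} [Field F] [AddCommGroup V] [Module F V]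
    [AddCommGroup W] [Module F W] {n k : ℕ}
    (bα : Module.Basis (Fin n) F V) (bβ : Module.Basis (Fin k) F W)
    (e : NZCG bα ≃g NZCG bβ) : n ≤ k := by
  have hv : ∀ i : Fin n, (bα i : V) ≠ 0 := fun i => bα.ne_zero i
  set v : Fin n → {x : V // x ≠ 0} := fun i => ⟨bα i, hv i⟩ with hvdef
  have hex : ∀ i, ∃ j, bβ.repr (e (v i)).1 j ≠ 0 := by
    intro i
    by_contra hc
    push_neg at hc
    exact (e (v i)).2 (bβ.repr.map_eq_zero_iff.mp (Finsupp.ext hc))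
  choose f hf using hex
  have hinj : Function.Injective f := by
    intro i₁ i₂ hf12
    by_contra hne12
    have hv12 : v i₁ ≠ v i₂ := by
      intro hh
      exact hne12 (bα.injective (congrArg Subtype.val hh))
    have hadj : (NZCG bβ).Adj (e (v i₁)) (e (v i₂)) := by
      refine ⟨fun hh => hv12 (e.injective hh), f i₁, hf i₁, ?_⟩
      rw [hf12]; exact hf i₂
    have hadjα : (NZCG bα).Adj (v i₁) (v i₂) := e.map_adj_iff.mp hadj
    obtain ⟨-, j, h1, h2⟩ := hadjα
    simp only [hvdef, Module.Basis.repr_self, Finsupp.single_apply] at h1 h2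
    by_cases hj1 : i₁ = j
    · subst hj1
      simp at h2
      exact hne12 h2.symm
    · simp [hj1] at h1
  simpa using Fintype.card_le_of_injective f hinj

theorem nzcg_iso_implies_eq_dim {F V W : Type*} [Field F] [AddCommGroup V] [Module F V]
    [AddCommGroup W] [Module F W] {n k : ℕ}
    (bα : Module.Basis (Fin n) F V) (bβ : Module.Basis (Fin k) F W)
    (h : Nonempty (NZCG bα ≃g NZCG bβ)) : n = k := by
  obtain ⟨e⟩ := h
  exact le_antisymm (nzcg_iso_le bα bβ e) (nzcg_iso_le bβ bα e.symm)
end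

section
/- Let φ be a graph automorphism of Γ(V_α), where {α₁,...,αₙ} is a basis of V. Then there exist a permutation σ ∈ Sₙ and non-zero scalars c₁,...,cₙ ∈ F such that φ(αᵢ) = cᵢ·α_{σ(i)} for all i; in particular φ maps the basis {α₁,...,αₙ} to another basis of V. -/
section Aux

variable {F V : Type*} [Field F] [AddCommGroup V] [Module F V] {n : ℕ}
  (b : Module.Basis (Fin n) F V)

/-- Closed-neighborhood containment relation. -/
def NZCGQ (v w : {v : V // v ≠ 0}) : Prop :=
  ∀ u, (u = v ∨ (NZCG b).Adj v u) → (u = w ∨ (NZCG b).Adj w u)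

lemma nzcg_mem_closed (v u : {v : V // v ≠ 0}) :
    (u = v ∨ (NZCG b).Adj v u) ↔ ∃ i, b.repr u.1 i ≠ 0 ∧ b.repr v.1 i ≠ 0 := by
  constructor
  · rintro (rfl | ⟨_, i, h1, h2⟩)
    · have hne : b.repr u.1 ≠ 0 := fun h => u.2 (by
        have := congrArg b.repr.symm h
        simpa using this)
      obtain ⟨i, hi⟩ := Finsupp.ne_iff.mp hne
      exact ⟨i, by simpa using hi, by simpa using hi⟩
    · exact ⟨i, h2, h1⟩
  · rintro ⟨i, h1, h2⟩
    by_cases h : u = v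
    · exact Or.inl h
    · exact Or.inr ⟨fun hvu => h hvu.symm, i, h2, h1⟩

lemma nzcg_repr_basis (j : Fin n) :
    b.repr ((⟨b j, b.ne_zero j⟩ : {v : V // v ≠ 0}) : V) = Finsupp.single j 1 := by
  simp

lemma nzcgQ_iff (v w : {v : V // v ≠ 0}) :
    NZCGQ b v w ↔ (b.repr v.1).support ⊆ (b.repr w.1).support := by
  constructor
  · intro hQ i hi
    have hi' : b.repr v.1 i ≠ 0 := Finsupp.mem_support_iff.mp hi
    have h := hQ ⟨b i, b.ne_zero i⟩ ((nzcg_mem_closed b v _).mpr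
      ⟨i, by simp, hi'⟩)
    obtain ⟨k, hk1, hk2⟩ := (nzcg_mem_closed b w _).mp h
    have : k = i := by
      by_contra hki
      exact hk1 (by
        have hik : ¬ i = k := fun h => hki h.symm
        simp [Finsupp.single_apply, hik])
    subst this
    exact Finsupp.mem_support_iff.mpr hk2
  · intro hsub u hu
    obtain ⟨i, h1, h2⟩ := (nzcg_mem_closed b v u).mp hu
    have h3 : b.repr w.1 i ≠ 0 :=
      Finsupp.mem_support_iff.mp (hsub (Finsupp.mem_support_iff.mpr h2))
    exact (nzcg_mem_closed b w u).mpr ⟨i, h1, h3⟩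

lemma nzcgQ_map (φ : NZCG b ≃g NZCG b) (v w : {v : V // v ≠ 0})
    (h : NZCGQ b v w) : NZCGQ b (φ v) (φ w) := by
  intro u hu
  have hu' : φ.symm u = v ∨ (NZCG b).Adj v (φ.symm u) := by
    rcases hu with h1 | h1
    · left; rw [h1]; exact φ.symm_apply_apply v
    · right
      have := φ.symm.map_adj_iff.mpr h1
      simpa using this
  rcases h _ hu' with h1 | h1
  · left
    have := congrArg φ h1
    simpa using this
  · right
    have := φ.map_adj_iff.mpr h1
    simpa using this

lemma nzcg_supp_subset (φ : NZCG b ≃g NZCG b) (v w : {v : V // v ≠ 0}) :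
    (b.repr ((φ v) : {v : V // v ≠ 0}).1).support ⊆ (b.repr ((φ w) : {v : V // v ≠ 0}).1).support ↔
      (b.repr v.1).support ⊆ (b.repr w.1).support := by
  constructor
  · intro h
    rw [← nzcgQ_iff]
    have := nzcgQ_map b φ.symm _ _ ((nzcgQ_iff b _ _).mpr h)
    simpa using this
  · intro h
    rw [← nzcgQ_iff]
    exact nzcgQ_map b φ _ _ ((nzcgQ_iff b _ _).mpr h)

end Aux

theorem nzcg_automorphism_form {F V : Type*} [Field F] [AddCommGroup V] [Module F V]
    {n : ℕ} (b : Module.Basis (Fin n) F V) (φ : NZCG b ≃g NZCG b) :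
    ∃ (σ : Equiv.Perm (Fin n)) (c : Fin n → F), (∀ i, c i ≠ 0) ∧
      ∀ i, ((φ ⟨b i, b.ne_zero i⟩ : {v : V // v ≠ 0}) : V) = c i • b (σ i) := by
  classical
  set vert : Fin n → {v : V // v ≠ 0} := fun i => ⟨b i, b.ne_zero i⟩ with hvert
  have hsuppv : ∀ i, (b.repr (vert i).1).support = {i} := by
    intro i
    rw [hvert]
    simp only
    rw [nzcg_repr_basis]
    exact Finsupp.support_single_ne_zero i one_ne_zero
  -- each φ (vert i) has nonempty support
  have hne : ∀ i, ((b.repr ((φ (vert i)) : {v : V // v ≠ 0}).1).support).Nonempty := by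
    intro i
    rw [Finsupp.support_nonempty_iff]
    intro h
    exact (φ (vert i)).2 (by
      have := congrArg b.repr.symm h
      simpa using this)
  choose τ hτ using hne
  -- the support of φ (vert i) is exactly {τ i}
  have hsingle : ∀ i, (b.repr ((φ (vert i)) : {v : V // v ≠ 0}).1).support = {τ i} := by
    intro i
    have hj := hτ i
    set j := τ i
    -- supp (vert j) = {j} ⊆ supp (φ (vert i))
    have h1 : (b.repr (vert j).1).support ⊆
        (b.repr ((φ (vert i)) : {v : V // v ≠ 0}).1).support := by
      rw [hsuppv j]
      exact Finset.singleton_subset_iff.mpr hj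
    -- transport back: vert j = φ (φ.symm (vert j))
    have h2 : (b.repr ((φ (φ.symm (vert j))) : {v : V // v ≠ 0}).1).support ⊆
        (b.repr ((φ (vert i)) : {v : V // v ≠ 0}).1).support := by
      rwa [φ.apply_symm_apply]
    have h3 : (b.repr (φ.symm (vert j)).1).support ⊆ (b.repr (vert i).1).support :=
      (nzcg_supp_subset b φ _ _).mp h2
    rw [hsuppv i] at h3
    have h4 : (b.repr (φ.symm (vert j)).1).support = {i} := by
      apply Finset.Subset.antisymm h3
      rw [Finset.singleton_subset_iff]
      have hne2 : b.repr (φ.symm (vert j)).1 ≠ 0 := fun h =>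
        (φ.symm (vert j)).2 (by
          have := congrArg b.repr.symm h
          simpa using this)
      obtain ⟨k, hk⟩ := Finsupp.support_nonempty_iff.mpr hne2
      have hk2 := h3 hk
      rw [Finset.mem_singleton] at hk2
      rwa [← hk2]
    -- supp (vert i) ⊆ supp (φ.symm (vert j))
    have h5 : (b.repr (vert i).1).support ⊆ (b.repr (φ.symm (vert j)).1).support := by
      rw [hsuppv i, h4]
    have h6 : (b.repr ((φ (vert i)) : {v : V // v ≠ 0}).1).support ⊆
        (b.repr ((φ (φ.symm (vert j))) : {v : V // v ≠ 0}).1).support :=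
      (nzcg_supp_subset b φ _ _).mpr h5
    rw [φ.apply_symm_apply, hsuppv j] at h6
    exact Finset.Subset.antisymm h6 (Finset.singleton_subset_iff.mpr hj)
  -- injectivity of τ
  have hinj : Function.Injective τ := by
    intro i j hij
    have h1 : (b.repr ((φ (vert i)) : {v : V // v ≠ 0}).1).support ⊆
        (b.repr ((φ (vert j)) : {v : V // v ≠ 0}).1).support := by
      rw [hsingle i, hsingle j, hij]
    have h2 := (nzcg_supp_subset b φ _ _).mp h1
    rw [hsuppv i, hsuppv j] at h2
    exact Finset.singleton_subset_iff.mp h2 |> Finset.mem_singleton.mp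
  refine ⟨Equiv.ofBijective τ (Finite.injective_iff_bijective.mp hinj),
    fun i => b.repr ((φ (vert i)) : {v : V // v ≠ 0}).1 (τ i), fun i => ?_, fun i => ?_⟩
  · exact Finsupp.mem_support_iff.mp (hτ i)
  · have h := (Finsupp.support_subset_singleton (a := τ i)).mp (le_of_eq (hsingle i))
    have : ((φ (vert i)) : {v : V // v ≠ 0}).1 =
        b.repr ((φ (vert i)) : {v : V // v ≠ 0}).1 (τ i) • b (τ i) := by
      conv_lhs => rw [← b.repr.symm_apply_apply ((φ (vert i)) : {v : V // v ≠ 0}).1, h]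
      simp [Finsupp.single_smul]
    simpa using this
end

section
/- Let φ be a graph automorphism of Γ(V_α) with φ(αᵢ) = cᵢ·α_{σ(i)} for a permutation σ ∈ Sₙ and non-zero scalars cᵢ. Then for any distinct indices i₁,...,i_k and any non-zero scalars c₁,...,c_k, φ(c₁α_{i₁} + ⋯ + c_kα_{i_k}) = d₁α_{σ(i₁)} + ⋯ + d_kα_{σ(i_k)} for some non-zero scalars d₁,...,d_k. In other words, φ preserves the support pattern up to the permutation σ. -/
theorem nzcg_automorphism_support {F V : Type*} [Field F] [AddCommGroup V] [Module F V]
    {n : ℕ} (b : Module.Basis (Fin n) F V) (φ : NZCG b ≃g NZCG b)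
    (σ : Equiv.Perm (Fin n)) (c : Fin n → F) (hc : ∀ i, c i ≠ 0)
    (hφ : ∀ i, ((φ ⟨b i, b.ne_zero i⟩ : {v : V // v ≠ 0}) : V) = c i • b (σ i))
    {k : ℕ} (g : Fin k → Fin n) (hg : Function.Injective g)
    (c' : Fin k → F) (hc' : ∀ j, c' j ≠ 0)
    (hv : (∑ j, c' j • b (g j)) ≠ 0) :
    ∃ d : Fin k → F, (∀ j, d j ≠ 0) ∧
      ((φ ⟨∑ j, c' j • b (g j), hv⟩ : {v : V // v ≠ 0}) : V)
        = ∑ j, d j • b (σ (g j)) := by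
  classical
  set v : V := ∑ j, c' j • b (g j) with hv_def
  have hreprv : ∀ i, b.repr v i = ∑ j, if g j = i then c' j else 0 := by
    intro i
    simp [hv_def, map_sum, Finsupp.single_apply]
  have hsupp_v : ∀ i, b.repr v i ≠ 0 ↔ ∃ j, g j = i := by
    intro i
    rw [hreprv]
    constructor
    · intro h
      by_contra hne
      push_neg at hne
      exact h (Finset.sum_eq_zero fun j _ => if_neg (hne j))
    · rintro ⟨j, rfl⟩
      rw [Finset.sum_eq_single j]
      · simpa using hc' j
      · intro j' _ hj'
        exact if_neg fun h => hj' (hg h)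
      · simp
  have hcbne : ∀ i : Fin n, c i • b (σ i) ≠ 0 := fun i =>
    smul_ne_zero (hc i) (b.ne_zero (σ i))
  have hφb : ∀ i, φ ⟨b i, b.ne_zero i⟩ = ⟨c i • b (σ i), hcbne i⟩ := fun i =>
    Subtype.ext (hφ i)
  set w : {x : V // x ≠ 0} := φ ⟨v, hv⟩ with hw
  have hreprcb : ∀ (i : Fin n) (m : Fin n),
      b.repr (c i • b (σ i)) m ≠ 0 ↔ m = σ i := by
    intro i m
    simp only [map_smul, Module.Basis.repr_self, Finsupp.smul_single, smul_eq_mul, mul_one,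
      Finsupp.single_apply]
    constructor
    · intro h
      by_contra hne
      exact h (if_neg fun he => hne he.symm)
    · rintro rfl
      simpa using hc i
  have key : ∀ i : Fin n, b.repr (w : V) (σ i) ≠ 0 ↔ b.repr v i ≠ 0 := by
    intro i
    have hadj : (NZCG b).Adj w (φ ⟨b i, b.ne_zero i⟩) ↔
        (NZCG b).Adj ⟨v, hv⟩ ⟨b i, b.ne_zero i⟩ := φ.map_adj_iff
    rw [hφb i] at hadj
    constructor
    · intro hne
      by_cases heq : w = ⟨c i • b (σ i), hcbne i⟩
      · -- then v = b i
        rw [← hφb i] at heq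
        have hvb : v = b i := congrArg Subtype.val (φ.injective heq)
        rw [hvb]
        simp
      · have hAdj : (NZCG b).Adj w ⟨c i • b (σ i), hcbne i⟩ :=
          ⟨heq, σ i, hne, (hreprcb i (σ i)).mpr rfl⟩
        obtain ⟨hne', j, h1, h2⟩ := hadj.mp hAdj
        have : j = i := by
          by_contra hji
          refine h2 ?_
          simp only [Module.Basis.repr_self, Finsupp.single_apply]
          rw [if_neg fun h => hji h.symm]
        rwa [this] at h1
    · intro hne
      by_cases heq : v = b i
      · have : w = ⟨c i • b (σ i), hcbne i⟩ := by
          rw [hw, ← hφb i]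
          congr 1
          exact Subtype.ext heq
        rw [this]
        exact (hreprcb i (σ i)).mpr rfl
      · have hAdj : (NZCG b).Adj ⟨v, hv⟩ ⟨b i, b.ne_zero i⟩ :=
          ⟨fun h => heq (congrArg Subtype.val h), i, hne, by simp⟩
        obtain ⟨hne', j, h1, h2⟩ := hadj.mpr hAdj
        have hj : j = σ i := (hreprcb i j).mp h2
        rwa [hj] at h1
  -- support of w is exactly σ ∘ g image
  have hsupp_w : ∀ m : Fin n, b.repr (w : V) m ≠ 0 ↔ ∃ j, σ (g j) = m := by
    intro m
    have := key (σ.symm m)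
    rw [σ.apply_symm_apply] at this
    rw [this, hsupp_v]
    constructor
    · rintro ⟨j, hj⟩
      exact ⟨j, by rw [hj, σ.apply_symm_apply]⟩
    · rintro ⟨j, hj⟩
      exact ⟨j, by rw [← hj, σ.symm_apply_apply]⟩
  refine ⟨fun j => b.repr (w : V) (σ (g j)), fun j => ?_, ?_⟩
  · exact (hsupp_w (σ (g j))).mpr ⟨j, rfl⟩
  · have hinj : Function.Injective (fun j => σ (g j)) :=
      σ.injective.comp hg
    have hsum : ∑ j : Fin k, b.repr (w : V) (σ (g j)) • b (σ (g j))
        = ∑ m : Fin n, b.repr (w : V) m • b m := by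
      rw [show (∑ j : Fin k, b.repr (w : V) (σ (g j)) • b (σ (g j)))
          = ∑ m ∈ Finset.image (fun j => σ (g j)) Finset.univ, b.repr (w : V) m • b m from
        (Finset.sum_image (f := fun m => b.repr (w : V) m • b m)
          (g := fun j => σ (g j)) (fun x _ y _ h => hinj h)).symm]
      refine Finset.sum_subset (Finset.subset_univ _) ?_
      intro m _ hm
      have : ¬ ∃ j, σ (g j) = m := by
        intro ⟨j, hj⟩
        exact hm (Finset.mem_image.mpr ⟨j, Finset.mem_univ j, hj⟩)
      have hz : b.repr (w : V) m = 0 := by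
        by_contra h
        exact this ((hsupp_w m).mp h)
      rw [hz, zero_smul]
    rw [hsum, Module.Basis.sum_repr]
end

section
/- If dim V > 1, then the non-zero component graph Γ(V_α) is not vertex-transitive; in particular, no graph automorphism of Γ(V_α) maps α₁ to α₁ + α₂. -/
namespace NZCGaux

variable {F V : Type*} [Field F] [AddCommGroup V] [Module F V] {n : ℕ}
    (b : Module.Basis (Fin n) F V)

/-- Closed-neighborhood membership: `w ∈ N[v]`. -/
def CN (v w : {v : V // v ≠ 0}) : Prop := w = v ∨ (NZCG b).Adj v w

lemma CN_map (e : NZCG b ≃g NZCG b) {v w : {v : V // v ≠ 0}} (h : CN b v w) :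
    CN b (e v) (e w) := by
  rcases h with h | h
  · exact Or.inl (congrArg e h)
  · exact Or.inr (e.map_adj_iff.2 h)

lemma repr_basis (k m : Fin n) : b.repr (b k) m = if k = m then 1 else 0 := by
  rw [b.repr_self, Finsupp.single_apply]

lemma CN_basis_iff (k : Fin n) (w : {v : V // v ≠ 0}) :
    CN b ⟨b k, b.ne_zero k⟩ w ↔ b.repr w.1 k ≠ 0 := by
  constructor
  · rintro (h | ⟨-, m, h1, h2⟩)
    · rw [h]
      simp [b.repr_self, Finsupp.add_apply, Finsupp.single_apply]
    · have hm : k = m := by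
        by_contra hkm
        rw [repr_basis, if_neg hkm] at h1
        exact h1 rfl
      rwa [← hm] at h2
  · intro h
    by_cases hw : w = ⟨b k, b.ne_zero k⟩
    · exact Or.inl hw
    · exact Or.inr ⟨fun he => hw he.symm, k, by simp [repr_basis], h⟩

end NZCGaux

theorem nzcg_not_vertex_transitive {F V : Type*} [Field F] [AddCommGroup V] [Module F V]
    {n : ℕ} (hn : 1 < n) (b : Module.Basis (Fin n) F V) (i j : Fin n) (hij : i ≠ j)
    (hab : b i + b j ≠ 0) :
    (¬ ∀ u v : {v : V // v ≠ 0}, ∃ e : NZCG b ≃g NZCG b, e u = v) ∧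
      ∀ e : NZCG b ≃g NZCG b, e ⟨b i, b.ne_zero i⟩ ≠ ⟨b i + b j, hab⟩ := by
  classical
  open NZCGaux in
  have hsij : ∀ m, b.repr (b i + b j) m = (if i = m then 1 else 0) + (if j = m then 1 else 0) := by
    intro m
    rw [map_add]
    simp [b.repr_self, Finsupp.add_apply, Finsupp.single_apply]
  set vi : {v : V // v ≠ 0} := ⟨b i, b.ne_zero i⟩ with hvi
  set vj : {v : V // v ≠ 0} := ⟨b j, b.ne_zero j⟩ with hvj
  set vij : {v : V // v ≠ 0} := ⟨b i + b j, hab⟩ with hvij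
  -- membership in N[vij] in terms of coordinates
  have CN_vij : ∀ w : {v : V // v ≠ 0},
      NZCGaux.CN b vij w ↔ (b.repr w.1 i ≠ 0 ∨ b.repr w.1 j ≠ 0) := by
    intro w
    constructor
    · rintro (h | ⟨-, m, h1, h2⟩)
      · left
        rw [h]
        simp [hvij, hsij, Finsupp.single_apply, hij, hij.symm]
      · rcases eq_or_ne m i with rfl | hmi
        · exact Or.inl h2
        · rcases eq_or_ne m j with rfl | hmj
          · exact Or.inr h2
          · exfalso
            rw [show (vij.1 : V) = b i + b j from rfl, hsij,
              if_neg (fun h => hmi h.symm), if_neg (fun h => hmj h.symm)] at h1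
            exact h1 (by ring)
    · intro h
      by_cases hw : w = vij
      · exact Or.inl hw
      · refine Or.inr ⟨fun he => hw he.symm, ?_⟩
        rcases h with h | h
        · exact ⟨i, by simp [hvij, hsij, Finsupp.single_apply, hij, hij.symm], h⟩
        · exact ⟨j, by simp [hvij, hsij, Finsupp.single_apply, hij, hij.symm], h⟩
  have key : ∀ e : NZCG b ≃g NZCG b, e vi ≠ vij := by
    intro e he
    set u : {v : V // v ≠ 0} := e.symm vi with hu
    have heu : e u = vi := e.apply_symm_apply vi
    -- N[u] ⊆ N[vi]
    have hsub : ∀ w : {v : V // v ≠ 0}, NZCGaux.CN b u w → b.repr w.1 i ≠ 0 := by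
      intro w hw
      have h1 : NZCGaux.CN b vi (e w) := heu ▸ CN_map b e hw
      have h2 : b.repr (e w).1 i ≠ 0 := (CN_basis_iff b i (e w)).1 h1
      have h3 : NZCGaux.CN b vij (e w) := (CN_vij (e w)).2 (Or.inl h2)
      have h4 : NZCGaux.CN b (e.symm vij) (e.symm (e w)) := CN_map b e.symm h3
      rw [← he, e.symm_apply_apply, e.symm_apply_apply] at h4
      exact (CN_basis_iff b i w).1 h4
    have hui : b.repr u.1 i ≠ 0 := hsub u (Or.inl rfl)
    -- consider x := e.symm vj
    set x : {v : V // v ≠ 0} := e.symm vj with hx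
    have hxj : NZCGaux.CN b vij vj := (CN_vij vj).2 (Or.inr (by simp [hvj, repr_basis]))
    have hxi : b.repr x.1 i ≠ 0 := by
      have h4 : NZCGaux.CN b (e.symm vij) (e.symm vj) := CN_map b e.symm hxj
      rw [← he, e.symm_apply_apply] at h4
      exact (CN_basis_iff b i x).1 h4
    have hux : NZCGaux.CN b u x := by
      by_cases hxu : x = u
      · exact Or.inl hxu
      · exact Or.inr ⟨fun h => hxu h.symm, i, hui, hxi⟩
    have hfin : NZCGaux.CN b vi vj := by
      have := CN_map b e hux
      rwa [heu, show e x = vj from e.apply_symm_apply vj] at this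
    have : b.repr (b j) i ≠ 0 := (CN_basis_iff b i vj).1 hfin
    rw [repr_basis, if_neg hij.symm] at this
    exact this rfl
  exact ⟨fun h => by obtain ⟨e, he⟩ := h vi vij; exact key e he, key⟩
end
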